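/- Let ω ∈ (0,∞], let w : (−ω,ω) → ℝ be continuous with w(x) > 0 for all x ∈ (−ω,ω), let N ≥ 1, and let p₁,…,p_N be real polynomials satisfying the orthonormality relations ∫_{−ω}^{ω} w(x) p_i(x) p_j(x) dx = δ_{ij} for all 1 ≤ i,j ≤ N. Let 0 < s < ω and define the N×N matrix M by M_{ij} = ∫_{−s}^{s} w(x) p_i(x) p_j(x) dx. Then M is symmetric, and for every nonzero vector v ∈ ℝ^N one has 0 < vᵀ M v < vᵀ v; in particular, every eigenvalue of M lies in the open interval (0,1). -/

import Mathlib

open MeasureTheory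

/-- Gaudin-type Lemma 6.3: for polynomials `p₁,…,p_N` orthonormal with
respect to a positive continuous weight `w` on `(-ω,ω)` and `0 < s < ω`, the Gram matrix
`M_{ij} = ∫_{-s}^{s} w p_i p_j` is symmetric, satisfies `0 < vᵀMv < vᵀv` for every
nonzero `v`, and all of its eigenvalues lie in `(0,1)`. -/
theorem gram_matrix_eigenvalues (ω : EReal) (hω : (0 : EReal) < ω) (w : ℝ → ℝ)
    (hwc : ContinuousOn w {x : ℝ | -ω < (x : EReal) ∧ (x : EReal) < ω})
    (hwpos : ∀ x : ℝ, -ω < (x : EReal) → (x : EReal) < ω → 0 < w x)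
    (N : ℕ) (hN : 1 ≤ N) (p : Fin N → Polynomial ℝ)
    (horth : ∀ i j : Fin N,
      (∫ x in {x : ℝ | -ω < (x : EReal) ∧ (x : EReal) < ω},
        w x * (p i).eval x * (p j).eval x) = if i = j then 1 else 0)
    (s : ℝ) (hs0 : 0 < s) (hsω : (s : EReal) < ω)
    (M : Matrix (Fin N) (Fin N) ℝ)
    (hM : ∀ i j, M i j = ∫ x in Set.Ioo (-s) s, w x * (p i).eval x * (p j).eval x) :
    M.IsSymm ∧
    (∀ v : Fin N → ℝ, v ≠ 0 →
      0 < dotProduct v (M.mulVec v) ∧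
        dotProduct v (M.mulVec v) < dotProduct v v) ∧
    (∀ (c : ℝ) (v : Fin N → ℝ), v ≠ 0 → M.mulVec v = c • v → 0 < c ∧ c < 1) := by
  set S : Set ℝ := {x : ℝ | -ω < (x : EReal) ∧ (x : EReal) < ω} with hSdef
  have hSmeas : MeasurableSet S := by
    have : S = (fun x : ℝ => (x : EReal)) ⁻¹' (Set.Ioo (-ω) ω) := rfl
    rw [this]
    exact measurableSet_Ioo.preimage continuous_coe_real_ereal.measurable
  -- membership in S from real bounds
  have hmemS : ∀ x : ℝ, -s ≤ x → ∀ t : ℝ, x < t → (t : EReal) ≤ ω → x ∈ S := by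
    intro x hx1 t hx2 ht
    constructor
    · have h1 : (-x : ℝ) ≤ s := by linarith
      have h2 : ((-x : ℝ) : EReal) < ω := lt_of_le_of_lt (EReal.coe_le_coe_iff.2 h1) hsω
      have h3 : -(x : EReal) < ω := by rw [← EReal.coe_neg]; exact h2
      exact EReal.neg_lt_of_neg_lt h3
    · exact lt_of_lt_of_le (EReal.coe_lt_coe_iff.2 hx2) ht
  have hIooS : Set.Ioo (-s) s ⊆ S := fun x hx => hmemS x hx.1.le s hx.2 hsω.le
  -- integrability of w * p i * p j on S
  have hasm : ∀ i j : Fin N,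
      AEStronglyMeasurable (fun x => w x * (p i).eval x * (p j).eval x) (volume.restrict S) := by
    intro i j
    exact (((hwc.mul (p i).continuous.continuousOn).mul
      (p j).continuous.continuousOn).aestronglyMeasurable hSmeas)
  have hdiag : ∀ i : Fin N, IntegrableOn (fun x => w x * (p i).eval x * (p i).eval x) S := by
    intro i
    by_contra h
    have := horth i i
    rw [integral_undef h] at this
    simp at this
  have hint : ∀ i j : Fin N, IntegrableOn (fun x => w x * (p i).eval x * (p j).eval x) S := by
    intro i j
    have hbi : IntegrableOn (fun x =>
        (w x * (p i).eval x * (p i).eval x + w x * (p j).eval x * (p j).eval x) / 2) S :=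
      ((hdiag i).add (hdiag j)).div_const 2
    refine hbi.mono' (hasm i j) ?_
    rw [ae_restrict_iff' hSmeas]
    filter_upwards with x hx
    have hw := hwpos x hx.1 hx.2
    have h1 : |w x * (p i).eval x * (p j).eval x| ≤
        (w x * (p i).eval x * (p i).eval x + w x * (p j).eval x * (p j).eval x) / 2 := by
      rcases abs_cases (w x * (p i).eval x * (p j).eval x) with ⟨he, _⟩ | ⟨he, _⟩ <;> rw [he] <;>
        nlinarith [sq_nonneg ((p i).eval x - (p j).eval x), sq_nonneg ((p i).eval x + (p j).eval x),
          hw.le]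
    rw [Real.norm_eq_abs]
    exact h1
  -- the quadratic form integrand
  set F : (Fin N → ℝ) → ℝ → ℝ := fun v x => w x * (∑ i, v i * (p i).eval x) ^ 2 with hFdef
  have hFexp : ∀ (v : Fin N → ℝ) (x : ℝ), F v x =
      ∑ i, ∑ j, v i * v j * (w x * (p i).eval x * (p j).eval x) := by
    intro v x
    simp only [hFdef]
    rw [pow_two, Finset.sum_mul_sum, Finset.mul_sum]
    refine Finset.sum_congr rfl fun i _ => ?_
    rw [Finset.mul_sum]
    exact Finset.sum_congr rfl fun j _ => by ring
  have hFint : ∀ v : Fin N → ℝ, IntegrableOn (F v) S := by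
    intro v
    have : F v = fun x => ∑ i, ∑ j, v i * v j * (w x * (p i).eval x * (p j).eval x) :=
      funext fun x => hFexp v x
    rw [this]
    exact integrable_finset_sum _ fun i _ =>
      integrable_finset_sum _ fun j _ => (hint i j).const_mul _
  have key : ∀ (T : Set ℝ), (∀ i j : Fin N,
        IntegrableOn (fun x => w x * (p i).eval x * (p j).eval x) T) → ∀ v : Fin N → ℝ,
      (∫ x in T, F v x) =
        ∑ i, ∑ j, v i * v j * ∫ x in T, w x * (p i).eval x * (p j).eval x := by
    intro T hT v
    simp_rw [hFexp]
    rw [integral_finset_sum _ fun i _ =>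
      integrable_finset_sum _ fun j _ => (hT i j).const_mul _]
    refine Finset.sum_congr rfl fun i _ => ?_
    rw [integral_finset_sum _ fun j _ => (hT i j).const_mul _]
    exact Finset.sum_congr rfl fun j _ => integral_const_mul _ _
  have hintIoo : ∀ i j : Fin N,
      IntegrableOn (fun x => w x * (p i).eval x * (p j).eval x) (Set.Ioo (-s) s) :=
    fun i j => (hint i j).mono_set hIooS
  -- quadratic form identities
  have hdotM : ∀ v : Fin N → ℝ,
      dotProduct v (M.mulVec v) = ∫ x in Set.Ioo (-s) s, F v x := by
    intro v
    rw [key _ hintIoo v]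
    simp only [dotProduct, Matrix.mulVec, Finset.mul_sum]
    refine Finset.sum_congr rfl fun i _ => Finset.sum_congr rfl fun j _ => ?_
    rw [hM]
    ring
  have hdotv : ∀ v : Fin N → ℝ, dotProduct v v = ∫ x in S, F v x := by
    intro v
    rw [key _ hint v]
    simp only [horth, mul_ite, mul_one, mul_zero, Finset.sum_ite_eq, Finset.mem_univ, if_true]
    rfl
  -- positivity of ∫ w q² on sets containing a nontrivial interval
  have hpos : ∀ (T : Set ℝ), MeasurableSet T → T ⊆ S → ∀ q : Polynomial ℝ, q ≠ 0 →
      IntegrableOn (fun x => w x * q.eval x ^ 2) T → ∀ a b : ℝ, a < b → Set.Ioo a b ⊆ T →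
      0 < ∫ x in T, w x * q.eval x ^ 2 := by
    intro T hTm hTS q hq hi a b hab hsub
    have hnn : 0 ≤ᵐ[volume.restrict T] fun x => w x * q.eval x ^ 2 := by
      rw [Filter.EventuallyLE, ae_restrict_iff' hTm]
      filter_upwards with x hx
      have := hwpos x (hTS hx).1 (hTS hx).2
      simp only [Pi.zero_apply]
      positivity
    rw [setIntegral_pos_iff_support_of_nonneg_ae hnn hi]
    have hZ : volume {x : ℝ | q.IsRoot x} = 0 :=
      (Polynomial.finite_setOf_isRoot hq).measure_zero _
    have hsub2 : Set.Ioo a b \ {x : ℝ | q.IsRoot x} ⊆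
        Function.support (fun x => w x * q.eval x ^ 2) ∩ T := by
      rintro x ⟨hx1, hx2⟩
      refine ⟨?_, hsub hx1⟩
      have hw := hwpos x (hTS (hsub hx1)).1 (hTS (hsub hx1)).2
      have hqx : q.eval x ≠ 0 := hx2
      simp only [Function.mem_support]
      exact mul_ne_zero hw.ne' (pow_ne_zero _ hqx)
    refine lt_of_lt_of_le ?_ (measure_mono hsub2)
    rw [measure_diff_null hZ, Real.volume_Ioo]
    exact ENNReal.ofReal_pos.2 (by linarith)
  -- eval of the combined polynomial
  have hqeval : ∀ (v : Fin N → ℝ) (x : ℝ),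
      (∑ i, v i • p i).eval x = ∑ i, v i * (p i).eval x := by
    intro v x
    rw [Polynomial.eval_finset_sum]
    exact Finset.sum_congr rfl fun i _ => by simp
  have hFq : ∀ v : Fin N → ℝ, F v = fun x => w x * ((∑ i, v i • p i).eval x) ^ 2 :=
    fun v => funext fun x => by rw [hFdef]; simp only [hqeval]
  -- nonzero v gives nonzero polynomial
  have hvv : ∀ v : Fin N → ℝ, v ≠ 0 → 0 < dotProduct v v := by
    intro v hv
    obtain ⟨i, hi⟩ := Function.ne_iff.1 hv
    have : (0:ℝ) < v i * v i := mul_self_pos.2 hi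
    refine Finset.sum_pos' (fun j _ => mul_self_nonneg _) ⟨i, Finset.mem_univ i, this⟩
  have hqne : ∀ v : Fin N → ℝ, v ≠ 0 → (∑ i, v i • p i) ≠ 0 := by
    intro v hv h0
    have h1 := hdotv v
    rw [hFq v, h0] at h1
    simp at h1
    exact hv h1
  -- the subinterval on the right of s inside S \ Ioo(-s,s)
  obtain ⟨t, hst, htω⟩ := EReal.lt_iff_exists_real_btwn.1 hsω
  have hst' : s < t := EReal.coe_lt_coe_iff.1 hst
  have hsubT : Set.Ioo s t ⊆ S \ Set.Ioo (-s) s := by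
    rintro x ⟨hx1, hx2⟩
    refine ⟨hmemS x (by linarith) t hx2 htω.le, fun hx3 => absurd hx3.2 (not_lt.2 hx1.le)⟩
  -- main part 2
  have part2 : ∀ v : Fin N → ℝ, v ≠ 0 →
      0 < dotProduct v (M.mulVec v) ∧
        dotProduct v (M.mulVec v) < dotProduct v v := by
    intro v hv
    have hlow : 0 < dotProduct v (M.mulVec v) := by
      rw [hdotM v]
      have := hpos (Set.Ioo (-s) s) measurableSet_Ioo hIooS (∑ i, v i • p i) (hqne v hv)
        (by rw [← hFq v]; exact (hFint v).mono_set hIooS) (-s) s (by linarith) le_rfl.subset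
      rw [hFq v]
      exact this
    have hdiff : (∫ x in S \ Set.Ioo (-s) s, F v x) =
        (∫ x in S, F v x) - ∫ x in Set.Ioo (-s) s, F v x :=
      integral_diff measurableSet_Ioo (hFint v) hIooS
    have hup : 0 < ∫ x in S \ Set.Ioo (-s) s, F v x := by
      have := hpos (S \ Set.Ioo (-s) s) (hSmeas.diff measurableSet_Ioo) Set.diff_subset
        (∑ i, v i • p i) (hqne v hv)
        (by rw [← hFq v]; exact (hFint v).mono_set Set.diff_subset) s t hst' hsubT
      rw [hFq v]
      exact this
    refine ⟨hlow, ?_⟩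
    rw [hdotM v, hdotv v]
    linarith [hdiff ▸ hup]
  refine ⟨?_, part2, ?_⟩
  · refine Matrix.IsSymm.ext fun i j => ?_
    rw [hM, hM]
    congr 1
    funext x
    ring
  · intro c v hv hvec
    obtain ⟨h1, h2⟩ := part2 v hv
    rw [hvec] at h1 h2
    have hd : dotProduct v (c • v) = c * dotProduct v v := by
      simp only [dotProduct, Pi.smul_apply, smul_eq_mul, Finset.mul_sum]
      exact Finset.sum_congr rfl fun i _ => by ring
    rw [hd] at h1 h2
    have hdv := hvv v hv
    constructor
    · nlinarith
    · exact (mul_lt_iff_lt_one_left hdv).1 h2
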